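/- PAC-Bayesian expectation bound for the disagreement: for any convex D : [0,1]×[0,1] → ℝ, D( E_S d_S(Q_S), E_S d_D(Q_S) ) ≤ (2/m) [ E_S KL(Q_S ‖ P) + (1/2) ln( E_S E_{(h,h')∼P²} e^{m·D(d_S(h,h'), d_D(h,h'))} ) ]. -/

import Mathlib

open Finset

/-- Jensen for log on a finite convex combination. -/
lemma log_sum_jensen {ι : Type*} (t : Finset ι) (w x : ι → ℝ)
    (hw0 : ∀ i ∈ t, 0 ≤ w i) (hw1 : ∑ i ∈ t, w i = 1)
    (hx : ∀ i ∈ t, 0 < x i) :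
    ∑ i ∈ t, w i * Real.log (x i) ≤ Real.log (∑ i ∈ t, w i * x i) := by
  have := strictConcaveOn_log_Ioi.concaveOn.le_map_sum (t := t) (w := w) (p := x)
    hw0 hw1 (fun i hi => hx i hi)
  simpa [smul_eq_mul] using this

/-- Donsker–Varadhan style change of measure, finite case. -/
lemma dv_bound {ι : Type*} [Fintype ι] (q p g : ι → ℝ) (hq0 : ∀ i, 0 ≤ q i)
    (hq1 : ∑ i, q i = 1) (hp0 : ∀ i, 0 ≤ p i) (hqp : ∀ i, p i = 0 → q i = 0) :
    ∑ i, q i * g i ≤ ∑ i, q i * Real.log (q i / p i)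
      + Real.log (∑ i, p i * Real.exp (g i)) := by
  classical
  set T : Finset ι := univ.filter (fun i => q i ≠ 0) with hT
  have hqT : ∀ i ∈ T, 0 < q i := by
    intro i hi
    rcases (lt_or_eq_of_le (hq0 i)) with h | h
    · exact h
    · exact absurd h.symm (by simpa [hT] using hi)
  have hpT : ∀ i ∈ T, 0 < p i := by
    intro i hi
    rcases (lt_or_eq_of_le (hp0 i)) with h | h
    · exact h
    · exact absurd (hqp i h.symm) (by simpa [hT] using hi)
  have hsumT : ∀ (A : ι → ℝ), ∑ i, q i * A i = ∑ i ∈ T, q i * A i := by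
    intro A
    refine (Finset.sum_subset (Finset.filter_subset _ _) ?_).symm
    intro i _ hi
    have : q i = 0 := by simpa [hT] using hi
    simp [this]
  have hw1 : ∑ i ∈ T, q i = 1 := by
    have h := hsumT (fun _ => 1); simp only [mul_one] at h; rw [← h, hq1]
  -- rewrite the LHS difference as a sum of logs over T
  have key : ∑ i, q i * g i - ∑ i, q i * Real.log (q i / p i)
      = ∑ i ∈ T, q i * Real.log (p i * Real.exp (g i) / q i) := by
    rw [hsumT (fun i => g i), hsumT (fun i => Real.log (q i / p i)), ← Finset.sum_sub_distrib]
    refine Finset.sum_congr rfl fun i hi => ?_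
    have hq := hqT i hi; have hp := hpT i hi
    have hexp : Real.exp (g i) > 0 := Real.exp_pos _
    rw [← mul_sub]
    congr 1
    rw [Real.log_div (by positivity) (ne_of_gt hq), Real.log_mul (ne_of_gt hp) (ne_of_gt hexp),
      Real.log_div (ne_of_gt hq) (ne_of_gt hp), Real.log_exp]
    ring
  have jensen : ∑ i ∈ T, q i * Real.log (p i * Real.exp (g i) / q i)
      ≤ Real.log (∑ i ∈ T, q i * (p i * Real.exp (g i) / q i)) := by
    refine log_sum_jensen T q _ (fun i hi => (hqT i hi).le) hw1 (fun i hi => ?_)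
    have := hqT i hi; have := hpT i hi; positivity
  have hTsum : ∑ i ∈ T, q i * (p i * Real.exp (g i) / q i)
      = ∑ i ∈ T, p i * Real.exp (g i) := by
    refine Finset.sum_congr rfl fun i hi => ?_
    have hq := (hqT i hi).ne'
    field_simp
  have hTpos : 0 < ∑ i ∈ T, p i * Real.exp (g i) := by
    have hne : T.Nonempty := by
      by_contra h
      rw [Finset.not_nonempty_iff_eq_empty] at h
      have := hw1; rw [h] at this; simp at this
    obtain ⟨i, hi⟩ := hne
    refine Finset.sum_pos' (fun j hj => by have := hpT j hj; positivity) ⟨i, hi, ?_⟩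
    have := hpT i hi; positivity
  have hmono : Real.log (∑ i ∈ T, p i * Real.exp (g i))
      ≤ Real.log (∑ i, p i * Real.exp (g i)) := by
    apply Real.log_le_log hTpos
    exact Finset.sum_le_sum_of_subset_of_nonneg (Finset.filter_subset _ _)
      (fun i _ _ => by have := hp0 i; positivity)
  linarith [key, jensen, hTsum ▸ jensen, hmono]

/-- KL of a product couple is twice the KL. -/
lemma kl_pair {H : Type*} [Fintype H] (Q P : H → ℝ) (hQ0 : ∀ h, 0 ≤ Q h)
    (hQ1 : ∑ h, Q h = 1) (hQP : ∀ h, P h = 0 → Q h = 0) :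
    ∑ h, ∑ h', (Q h * Q h') * Real.log ((Q h * Q h') / (P h * P h'))
      = 2 * ∑ h, Q h * Real.log (Q h / P h) := by
  have key : ∀ h h', (Q h * Q h') * Real.log ((Q h * Q h') / (P h * P h'))
      = (Q h * Q h') * (Real.log (Q h / P h) + Real.log (Q h' / P h')) := by
    intro h h'
    rcases eq_or_lt_of_le (hQ0 h) with hq | hq
    · simp [← hq]
    rcases eq_or_lt_of_le (hQ0 h') with hq' | hq'
    · simp [← hq']
    have hp : P h ≠ 0 := fun hc => absurd (hQP h hc) hq.ne'
    have hp' : P h' ≠ 0 := fun hc => absurd (hQP h' hc) hq'.ne'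
    congr 1
    rw [show (Q h * Q h') / (P h * P h') = (Q h / P h) * (Q h' / P h') by
      field_simp]
    rw [Real.log_mul (by positivity) (by positivity)]
  simp only [key, mul_add, Finset.sum_add_distrib]
  have e1 : ∀ c : ℝ, ∑ h : H, Q h * c = c := fun c => by
    rw [← Finset.sum_mul, hQ1, one_mul]
  have t1 : ∑ h, ∑ h', Q h * Q h' * Real.log (Q h / P h)
      = ∑ h, Q h * Real.log (Q h / P h) := by
    refine Finset.sum_congr rfl fun h _ => ?_
    calc ∑ h', Q h * Q h' * Real.log (Q h / P h)
        = ∑ h', Q h' * (Q h * Real.log (Q h / P h)) :=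
          Finset.sum_congr rfl fun h' _ => by ring
      _ = Q h * Real.log (Q h / P h) := e1 _
  have t2 : ∑ h, ∑ h', Q h * Q h' * Real.log (Q h' / P h')
      = ∑ h', Q h' * Real.log (Q h' / P h') := by
    rw [Finset.sum_comm]
    refine Finset.sum_congr rfl fun h' _ => ?_
    calc ∑ h, Q h * Q h' * Real.log (Q h' / P h')
        = ∑ h, Q h * (Q h' * Real.log (Q h' / P h')) :=
          Finset.sum_congr rfl fun h _ => by ring
      _ = Q h' * Real.log (Q h' / P h') := e1 _
  rw [t1, t2]; ring

/-- Expand a sum over a triple product. -/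
lemma expand3 {A H : Type*} [Fintype A] [Fintype H] (w : A → ℝ) (Q : A → H → ℝ)
    (G : A → H → H → ℝ) :
    ∑ x : A × H × H, (w x.1 * (Q x.1 x.2.1 * Q x.1 x.2.2)) * G x.1 x.2.1 x.2.2
      = ∑ s, w s * ∑ h, ∑ h', Q s h * Q s h' * G s h h' := by
  simp only [Fintype.sum_prod_type, Finset.mul_sum]
  refine Finset.sum_congr rfl fun s _ => Finset.sum_congr rfl fun h _ =>
    Finset.sum_congr rfl fun h' _ => by ring


/-- PAC-Bayesian expectation bound for the disagreement: for any jointly convex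
`D : [0,1]×[0,1] → ℝ` (here `f`),
`D(E_S d_S(Q_S), E_S d_D(Q_S)) ≤ (2/m)[E_S KL(Q_S‖P) + (1/2) ln(E_S E_{(h,h')∼P²} e^{m·D(d_S(h,h'), d_D(h,h'))})]`.
Same discrete setting as the general expectation bound. -/
theorem pac_bayes_expectation_bound_disagreement
    {X H : Type*} [Fintype X] [Fintype H] (m : ℕ) (hm : 0 < m)
    (v : H → X → ℝ) (hv : ∀ h x, v h x = 1 ∨ v h x = -1)
    (D : X × Bool → ℝ) (hD0 : ∀ z, 0 ≤ D z) (hD1 : ∑ z, D z = 1)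
    (P : H → ℝ) (hP0 : ∀ h, 0 ≤ P h) (hP1 : ∑ h, P h = 1)
    (Q : (Fin m → X × Bool) → H → ℝ)
    (hQ0 : ∀ s h, 0 ≤ Q s h) (hQ1 : ∀ s, ∑ h, Q s h = 1)
    (hQP : ∀ s h, P h = 0 → Q s h = 0)
    (f : ℝ → ℝ → ℝ)
    (hf : ConvexOn ℝ ((Set.Icc (0 : ℝ) 1) ×ˢ (Set.Icc (0 : ℝ) 1))
            (fun q : ℝ × ℝ => f q.1 q.2)) :
    -- disagreement indicator of a pair of voters on an input :
    let dis : H → H → X → ℝ := fun h h' x => if v h x = v h' x then 0 else 1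
    -- true and empirical pairwise disagreements :
    let dD : H → H → ℝ := fun h h' => ∑ z : X × Bool, D z * dis h h' z.1
    let dS : (Fin m → X × Bool) → H → H → ℝ := fun s h h' =>
      (∑ i, dis h h' (s i).1) / m
    -- expectation over samples S ∼ D^m :
    let ES : ((Fin m → X × Bool) → ℝ) → ℝ := fun g =>
      ∑ s : Fin m → X × Bool, (∏ i, D (s i)) * g s
    f (ES fun s => ∑ h, ∑ h', Q s h * Q s h' * dS s h h')
      (ES fun s => ∑ h, ∑ h', Q s h * Q s h' * dD h h')
      ≤ (2 / m) *
        ((ES fun s => ∑ h, Q s h * Real.log (Q s h / P h))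
          + (1 / 2) * Real.log
              (ES fun s => ∑ h, ∑ h', P h * P h' *
                Real.exp (m * f (dS s h h') (dD h h')))) := by
  intro dis dD dS ES
  classical
  have hm' : (0:ℝ) < m := by exact_mod_cast hm
  have hdis0 : ∀ h h' x, 0 ≤ dis h h' x := fun h h' x => by
    simp only [dis]; split <;> norm_num
  have hdis1 : ∀ h h' x, dis h h' x ≤ 1 := fun h h' x => by
    simp only [dis]; split <;> norm_num
  have hdS0 : ∀ s h h', 0 ≤ dS s h h' := fun s h h' =>
    div_nonneg (Finset.sum_nonneg fun i _ => hdis0 _ _ _) hm'.le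
  have hdS1 : ∀ s h h', dS s h h' ≤ 1 := fun s h h' => by
    show (∑ i, dis h h' (s i).1) / m ≤ 1
    rw [div_le_one hm']
    calc ∑ i, dis h h' (s i).1 ≤ ∑ _i : Fin m, (1:ℝ) :=
          Finset.sum_le_sum fun i _ => hdis1 _ _ _
      _ = m := by simp
  have hdD0 : ∀ h h', 0 ≤ dD h h' := fun h h' =>
    Finset.sum_nonneg fun z _ => mul_nonneg (hD0 z) (hdis0 _ _ _)
  have hdD1 : ∀ h h', dD h h' ≤ 1 := fun h h' => by
    show ∑ z : X × Bool, D z * dis h h' z.1 ≤ 1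
    calc ∑ z : X × Bool, D z * dis h h' z.1 ≤ ∑ z : X × Bool, D z :=
          Finset.sum_le_sum fun z _ => by
            calc D z * dis h h' z.1 ≤ D z * 1 :=
                  mul_le_mul_of_nonneg_left (hdis1 _ _ _) (hD0 z)
              _ = D z := mul_one _
      _ = 1 := hD1
  -- sample weights
  set w : (Fin m → X × Bool) → ℝ := fun s => ∏ i, D (s i) with hw
  have hw0 : ∀ s, 0 ≤ w s := fun s => Finset.prod_nonneg fun i _ => hD0 _
  have hw1 : ∑ s, w s = 1 := by
    have h := Fintype.sum_pow D m
    rw [hD1, one_pow] at h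
    exact h.symm
  -- big Jensen step
  set W : ((Fin m → X × Bool) × H × H) → ℝ :=
    fun x => w x.1 * (Q x.1 x.2.1 * Q x.1 x.2.2) with hW
  set pt : ((Fin m → X × Bool) × H × H) → ℝ × ℝ :=
    fun x => (dS x.1 x.2.1 x.2.2, dD x.2.1 x.2.2) with hpt
  have hW0 : ∀ x, 0 ≤ W x := fun x =>
    mul_nonneg (hw0 _) (mul_nonneg (hQ0 _ _) (hQ0 _ _))
  have hQQ1 : ∀ s, ∑ h, ∑ h', Q s h * Q s h' * (1:ℝ) = 1 := by
    intro s
    simp only [mul_one]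
    rw [← Finset.sum_mul_sum, hQ1 s, one_mul]
  have hW1 : ∑ x, W x = 1 := by
    simp only [hW, Fintype.sum_prod_type, ← Finset.mul_sum]
    rw [← hw1]
    refine Finset.sum_congr rfl fun s _ => ?_
    simp [hQ1 s]
  have hmem : ∀ x : (Fin m → X × Bool) × H × H,
      pt x ∈ (Set.Icc (0:ℝ) 1) ×ˢ (Set.Icc (0:ℝ) 1) := fun x =>
    ⟨⟨hdS0 _ _ _, hdS1 _ _ _⟩, ⟨hdD0 _ _, hdD1 _ _⟩⟩
  have jensen1 := hf.map_sum_le (t := Finset.univ) (w := W) (p := pt)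
    (fun i _ => hW0 i) hW1 (fun i _ => hmem i)
  have hsum_pt : ∑ x, W x • pt x
      = (ES (fun s => ∑ h, ∑ h', Q s h * Q s h' * dS s h h'),
         ES (fun s => ∑ h, ∑ h', Q s h * Q s h' * dD h h')) := by
    have h1 : (∑ x, W x • pt x).1 = ∑ x, W x * (pt x).1 := by
      rw [Prod.fst_sum]
      exact Finset.sum_congr rfl fun x _ => rfl
    have h2 : (∑ x, W x • pt x).2 = ∑ x, W x * (pt x).2 := by
      rw [Prod.snd_sum]
      exact Finset.sum_congr rfl fun x _ => rfl
    apply Prod.ext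
    · rw [h1]
      simp only [hW, hpt]
      exact expand3 w Q (fun s h h' => dS s h h')
    · rw [h2]
      simp only [hW, hpt]
      exact expand3 w Q (fun s h h' => dD h h')
  -- per-sample Donsker–Varadhan
  have step2 : ∀ s, ∑ h, ∑ h', Q s h * Q s h' * f (dS s h h') (dD h h')
      ≤ (1 / m) * (2 * (∑ h, Q s h * Real.log (Q s h / P h))
          + Real.log (∑ h, ∑ h', P h * P h' *
              Real.exp (m * f (dS s h h') (dD h h')))) := by
    intro s
    have hdv := dv_bound (ι := H × H) (fun p => Q s p.1 * Q s p.2)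
      (fun p => P p.1 * P p.2)
      (fun p => (m : ℝ) * f (dS s p.1 p.2) (dD p.1 p.2))
      (fun p => mul_nonneg (hQ0 _ _) (hQ0 _ _))
      (by rw [Fintype.sum_prod_type, ← Finset.sum_mul_sum, hQ1 s, one_mul])
      (fun p => mul_nonneg (hP0 _) (hP0 _))
      (fun p hp => by
        show Q s p.1 * Q s p.2 = 0
        rcases mul_eq_zero.mp hp with h | h
        · rw [hQP s p.1 h, zero_mul]
        · rw [hQP s p.2 h, mul_zero])
    have hkl : ∑ p : H × H, (Q s p.1 * Q s p.2) *
          Real.log ((Q s p.1 * Q s p.2) / (P p.1 * P p.2))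
        = 2 * ∑ h, Q s h * Real.log (Q s h / P h) := by
      rw [Fintype.sum_prod_type]
      exact kl_pair (Q s) P (hQ0 s) (hQ1 s) (hQP s)
    have hg : ∑ p : H × H, (Q s p.1 * Q s p.2) *
          ((m : ℝ) * f (dS s p.1 p.2) (dD p.1 p.2))
        = (m : ℝ) * ∑ h, ∑ h', Q s h * Q s h' * f (dS s h h') (dD h h') := by
      rw [Fintype.sum_prod_type, Finset.mul_sum]
      refine Finset.sum_congr rfl fun h _ => ?_
      rw [Finset.mul_sum]
      exact Finset.sum_congr rfl fun h' _ => by ring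
    have hz : ∑ p : H × H, (P p.1 * P p.2) *
          Real.exp ((m : ℝ) * f (dS s p.1 p.2) (dD p.1 p.2))
        = ∑ h, ∑ h', P h * P h' * Real.exp ((m:ℝ) * f (dS s h h') (dD h h')) := by
      rw [Fintype.sum_prod_type]
    rw [hkl, hg, hz] at hdv
    have h4 : ∑ h, ∑ h', Q s h * Q s h' * f (dS s h h') (dD h h')
        = (1/(m:ℝ)) * ((m:ℝ) * ∑ h, ∑ h', Q s h * Q s h' * f (dS s h h') (dD h h')) := by
      field_simp
    rw [h4]
    exact mul_le_mul_of_nonneg_left hdv (by positivity)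
  -- positivity of the moment term
  obtain ⟨h0, hh0⟩ : ∃ h, 0 < P h := by
    by_contra hc
    push_neg at hc
    have hz : ∑ h, P h = 0 := Finset.sum_eq_zero fun h _ => le_antisymm (hc h) (hP0 h)
    rw [hP1] at hz; norm_num at hz
  set Z : (Fin m → X × Bool) → ℝ := fun s => ∑ h, ∑ h', P h * P h' *
      Real.exp ((m:ℝ) * f (dS s h h') (dD h h')) with hZ
  have hZpos : ∀ s, 0 < Z s := by
    intro s
    refine Finset.sum_pos'
      (fun h _ => Finset.sum_nonneg fun h' _ =>
        mul_nonneg (mul_nonneg (hP0 _) (hP0 _)) (Real.exp_pos _).le)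
      ⟨h0, Finset.mem_univ _, ?_⟩
    refine Finset.sum_pos'
      (fun h' _ => mul_nonneg (mul_nonneg (hP0 _) (hP0 _)) (Real.exp_pos _).le)
      ⟨h0, Finset.mem_univ _, mul_pos (mul_pos hh0 hh0) (Real.exp_pos _)⟩
  set KL : (Fin m → X × Bool) → ℝ := fun s => ∑ h, Q s h * Real.log (Q s h / P h)
    with hKL
  have logjensen : ∑ s, w s * Real.log (Z s) ≤ Real.log (∑ s, w s * Z s) :=
    log_sum_jensen Finset.univ w Z (fun s _ => hw0 s) hw1 (fun s _ => hZpos s)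
  calc f (ES fun s => ∑ h, ∑ h', Q s h * Q s h' * dS s h h')
        (ES fun s => ∑ h, ∑ h', Q s h * Q s h' * dD h h')
      = f (∑ x, W x • pt x).1 (∑ x, W x • pt x).2 := by rw [hsum_pt]
    _ ≤ ∑ x, W x • f (pt x).1 (pt x).2 := jensen1
    _ = ∑ s, w s * ∑ h, ∑ h', Q s h * Q s h' * f (dS s h h') (dD h h') := by
        simp only [smul_eq_mul, hW, hpt]
        exact expand3 w Q (fun s h h' => f (dS s h h') (dD h h'))
    _ ≤ ∑ s, w s * ((1/(m:ℝ)) * (2 * KL s + Real.log (Z s))) := by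
        refine Finset.sum_le_sum fun s _ => mul_le_mul_of_nonneg_left ?_ (hw0 s)
        simpa [hKL, hZ] using step2 s
    _ = (2/(m:ℝ)) * (∑ s, w s * KL s) + (1/(m:ℝ)) * ∑ s, w s * Real.log (Z s) := by
        rw [Finset.mul_sum, Finset.mul_sum, ← Finset.sum_add_distrib]
        exact Finset.sum_congr rfl fun s _ => by ring
    _ ≤ (2/(m:ℝ)) * (∑ s, w s * KL s) + (1/(m:ℝ)) * Real.log (∑ s, w s * Z s) := by
        have h1m : (0:ℝ) ≤ 1/(m:ℝ) := by positivity
        exact add_le_add_right (mul_le_mul_of_nonneg_left logjensen h1m) _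
    _ = (2/(m:ℝ)) * ((∑ s, w s * KL s)
          + (1/2) * Real.log (∑ s, w s * Z s)) := by
        field_simp
    _ = (2 / m) *
        ((ES fun s => ∑ h, Q s h * Real.log (Q s h / P h))
          + (1 / 2) * Real.log
              (ES fun s => ∑ h, ∑ h', P h * P h' *
                Real.exp (m * f (dS s h h') (dD h h')))) := by
        simp only [hw, hKL, hZ, ES]
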